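/- Let λ > 0 and α ∈ [0,1] be real numbers, let (err^f_t)_{t≥1} be a sequence with err^f_t ∈ {0,1} for all t, and let (α_t)_{t≥1} satisfy the online update rule α_{t+1} = α_t + λ(α − err^f_t) for all t ≥ 1, with α_1 ∈ [0,1], err^f_t = 0 whenever α_t < 0, and err^f_t = 1 whenever α_t > 1. Then for every T ≥ 1, (1/T) · Σ_{t=1}^{T} err^f_t ≤ α + (α_1 − α_{T+1})/(T·λ), and moreover lim_{T→∞} (1/T) · Σ_{t=1}^{T} err^f_t = α. -/

import Mathlib

open Filter

/-- Corollary 1 (long-term coverage of FOCP/AFOCP): under the update rule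
`α_{t+1} = α_t + λ(α − err^f_t)` with `err^f_t ∈ {0,1}`, `α, α_1 ∈ [0,1]`,
`err^f_t = 0` whenever `α_t < 0`, and `err^f_t = 1` whenever `α_t > 1`, the
time-averaged error is bounded as
`(1/T) Σ_{t=1}^T err^f_t ≤ α + (α_1 − α_{T+1})/(Tλ)` for all `T ≥ 1`,
and it converges to `α` as `T → ∞`. -/
theorem focp_longterm_coverage
    (lam α : ℝ) (hlam : 0 < lam) (hα : α ∈ Set.Icc (0 : ℝ) 1)
    (errf αt : ℕ → ℝ)
    (herr : ∀ t : ℕ, 1 ≤ t → errf t = 0 ∨ errf t = 1)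
    (hupd : ∀ t : ℕ, 1 ≤ t → αt (t + 1) = αt t + lam * (α - errf t))
    (hinit : αt 1 ∈ Set.Icc (0 : ℝ) 1)
    (hlow : ∀ t : ℕ, 1 ≤ t → αt t < 0 → errf t = 0)
    (hhigh : ∀ t : ℕ, 1 ≤ t → αt t > 1 → errf t = 1) :
    (∀ T : ℕ, 1 ≤ T →
      (1 / (T : ℝ)) * ∑ t ∈ Finset.Icc 1 T, errf t
        ≤ α + (αt 1 - αt (T + 1)) / ((T : ℝ) * lam)) ∧
    Tendsto (fun T : ℕ => (1 / (T : ℝ)) * ∑ t ∈ Finset.Icc 1 T, errf t)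
      atTop (nhds α) := by
  obtain ⟨hα0, hα1⟩ := hα
  obtain ⟨hi0, hi1⟩ := hinit
  -- boundedness: αt t ∈ [-lam, 1 + lam] for all t ≥ 1
  have hbound : ∀ t : ℕ, 1 ≤ t → -lam ≤ αt t ∧ αt t ≤ 1 + lam := by
    intro t ht
    induction t with
    | zero => omega
    | succ n ih =>
      rcases Nat.eq_or_lt_of_le ht with h | h
      · simp only [← h]
        constructor <;> linarith
      · have hn : 1 ≤ n := by omega
        obtain ⟨ihl, ihr⟩ := ih hn
        rw [hupd n hn]
        rcases lt_trichotomy (αt n) 0 with hc | hc | hc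
        · rw [hlow n hn hc]
          constructor <;> nlinarith
        · rcases herr n hn with he | he <;> rw [he] <;>
            constructor <;> nlinarith
        · rcases lt_or_ge 1 (αt n) with hc2 | hc2
          · rw [hhigh n hn hc2]
            constructor <;> nlinarith
          · rcases herr n hn with he | he <;> rw [he] <;>
              constructor <;> nlinarith
  -- telescoping identity
  have htel : ∀ T : ℕ, 1 ≤ T →
      αt (T + 1) = αt 1 + lam * ((T : ℝ) * α - ∑ t ∈ Finset.Icc 1 T, errf t) := by
    intro T hT
    induction T with
    | zero => omega
    | succ n ih =>
      rcases Nat.eq_or_lt_of_le hT with h | h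
      · simp only [← h]
        rw [hupd 1 le_rfl]
        simp
      · have hn : 1 ≤ n := by omega
        rw [hupd (n + 1) (by omega), ih hn,
          Finset.sum_Icc_succ_top (by omega : 1 ≤ n + 1)]
        push_cast
        ring
  -- the exact average identity
  have hkey : ∀ T : ℕ, 1 ≤ T →
      (1 / (T : ℝ)) * ∑ t ∈ Finset.Icc 1 T, errf t
        = α + (αt 1 - αt (T + 1)) / ((T : ℝ) * lam) := by
    intro T hT
    have hT0 : (0 : ℝ) < (T : ℝ) := by exact_mod_cast hT
    have := htel T hT
    field_simp
    nlinarith [this]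
  constructor
  · intro T hT
    rw [hkey T hT]
  · have hC : ∀ T : ℕ, |αt 1 - αt (T + 1)| ≤ 1 + 2 * lam + 1 := by
      intro T
      obtain ⟨hl, hr⟩ := hbound (T + 1) (by omega)
      rw [abs_le]
      constructor <;> linarith
    have h0 : Tendsto (fun T : ℕ => (αt 1 - αt (T + 1)) / ((T : ℝ) * lam))
        atTop (nhds 0) := by
      have hg : Tendsto (fun T : ℕ => (1 + 2 * lam + 1) / lam * (1 / (T : ℝ)))
          atTop (nhds 0) := by
        have := (tendsto_one_div_atTop_nhds_zero_nat).const_mul ((1 + 2 * lam + 1) / lam)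
        simpa using this
      apply squeeze_zero_norm _ hg
      intro T
      rcases Nat.eq_zero_or_pos T with h | h
      · simp [h]
      · have hT0 : (0 : ℝ) < (T : ℝ) := by exact_mod_cast h
        rw [Real.norm_eq_abs, abs_div, abs_of_pos (by positivity : (0:ℝ) < (T:ℝ) * lam)]
        rw [div_le_iff₀ (by positivity)]
        calc |αt 1 - αt (T + 1)| ≤ 1 + 2 * lam + 1 := hC T
          _ = (1 + 2 * lam + 1) / lam * (1 / (T : ℝ)) * ((T : ℝ) * lam) := by
              field_simp
    have : Tendsto (fun T : ℕ => α + (αt 1 - αt (T + 1)) / ((T : ℝ) * lam))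
        atTop (nhds α) := by
      simpa using (tendsto_const_nhds.add h0 : Tendsto _ atTop (nhds (α + 0)))
    refine this.congr' ?_
    filter_upwards [eventually_ge_atTop 1] with T hT
    exact (hkey T hT).symm
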